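/- Let f be a polynomial, 0 < α < 1, c ∈ ℝ, and x > c. Then the Caputo fractional derivative of order 1+α satisfies (x−c)·(ᶜ_cD^{1+α}_x f)(x) = (ᶜ_cD^α_x x) · Σ_{k=2}^∞ [Γ(2−α)/Γ(k−α)] f^{(k)}(c)(x−c)^{k−1}, where ᶜ_cD^α_x x = (x−c)^{1−α}/Γ(2−α). -/

import Mathlib

open intervalIntegral Polynomial in
lemma beta_real (k : ℕ) {α : ℝ} (hα0 : 0 < α) (hα1 : α < 1) :
    ∫ t in (0:ℝ)..1, t ^ k * (1 - t) ^ (-α) =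
      (k.factorial : ℝ) * Real.Gamma (1 - α) / Real.Gamma ((k:ℝ) + 2 - α) := by
  have h1α : (0:ℝ) < 1 - α := by linarith
  have hB : Complex.betaIntegral ((k:ℂ) + 1) ((1:ℂ) - α) =
      ((∫ t in (0:ℝ)..1, t ^ k * (1 - t) ^ (-α) : ℝ) : ℂ) := by
    rw [Complex.betaIntegral, ← intervalIntegral.integral_ofReal]
    apply intervalIntegral.integral_congr
    intro t ht
    rw [Set.uIcc_of_le (by norm_num : (0:ℝ) ≤ 1)] at ht
    obtain ⟨h0, h1⟩ := ht
    dsimp only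
    have e1 : (k:ℂ) + 1 - 1 = (k : ℕ) := by push_cast; ring
    have e2 : (1:ℂ) - (α:ℂ) - 1 = ((-α : ℝ) : ℂ) := by push_cast [Complex.ofReal_neg]; ring
    rw [e1, e2, Complex.cpow_natCast, ← Complex.ofReal_one, ← Complex.ofReal_sub,
      ← Complex.ofReal_cpow (by linarith), ← Complex.ofReal_pow, ← Complex.ofReal_mul]
  have key := Complex.Gamma_mul_Gamma_eq_betaIntegral
    (s := (k:ℂ) + 1) (t := (1:ℂ) - α) (by simp; positivity) (by simp [h1α])
  rw [hB] at key
  have e3 : ((k:ℂ) + 1 + ((1:ℂ) - α)) = (((k:ℝ) + 2 - α : ℝ) : ℂ) := by push_cast; ring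
  have e4 : ((k:ℂ) + 1) = (((k:ℝ) + 1 : ℝ) : ℂ) := by push_cast; ring
  have e5 : ((1:ℂ) - α) = (((1:ℝ) - α : ℝ) : ℂ) := by push_cast; ring
  rw [e3, e4, e5, Complex.Gamma_ofReal, Complex.Gamma_ofReal, Complex.Gamma_ofReal,
    ← Complex.ofReal_mul, ← Complex.ofReal_mul] at key
  have key' : Real.Gamma ((k:ℝ)+1) * Real.Gamma (1-α)
      = Real.Gamma ((k:ℝ)+2-α) * ∫ t in (0:ℝ)..1, t ^ k * (1 - t) ^ (-α) :=
    Complex.ofReal_injective key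
  have hΓpos : 0 < Real.Gamma ((k:ℝ)+2-α) :=
    Real.Gamma_pos_of_pos (by linarith [Nat.cast_nonneg (α := ℝ) k])
  have hfact : Real.Gamma ((k:ℝ)+1) = (k.factorial : ℝ) := by
    exact_mod_cast Real.Gamma_nat_eq_factorial k
  field_simp [hfact] at key' ⊢
  rw [hfact] at key'
  linarith [key']

lemma scaled_integral (k : ℕ) {α c x : ℝ} (hcx : c < x) :
    ∫ s in c..x, (s - c) ^ k * (x - s) ^ (-α) =
      (x - c) ^ (k + 1) * (x - c) ^ (-α) *
        ∫ t in (0:ℝ)..1, t ^ k * (1 - t) ^ (-α) := by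
  have hxc : (0:ℝ) < x - c := by linarith
  set g : ℝ → ℝ := fun u => u ^ k * ((x - c) - u) ^ (-α) with hg
  have h1 : (∫ s in c..x, (s - c) ^ k * (x - s) ^ (-α)) = ∫ u in (0:ℝ)..(x - c), g u := by
    have := intervalIntegral.integral_comp_sub_right (a := c) (b := x) g c
    rw [sub_self] at this
    rw [← this]
    apply intervalIntegral.integral_congr
    intro s _
    simp only [hg]
    ring_nf
  have h2 : (∫ t in (0:ℝ)..1, g ((x - c) * t)) = (x - c)⁻¹ • ∫ u in (0:ℝ)..(x - c), g u := by
    have := intervalIntegral.integral_comp_mul_left (a := (0:ℝ)) (b := 1) g (ne_of_gt hxc)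
    simpa using this
  have h3 : (∫ t in (0:ℝ)..1, g ((x - c) * t)) =
      (x - c) ^ k * (x - c) ^ (-α) * ∫ t in (0:ℝ)..1, t ^ k * (1 - t) ^ (-α) := by
    rw [← intervalIntegral.integral_const_mul]
    apply intervalIntegral.integral_congr
    intro t ht
    rw [Set.uIcc_of_le (by norm_num : (0:ℝ) ≤ 1)] at ht
    obtain ⟨h0, hle⟩ := ht
    simp only [hg]
    have : (x - c) - (x - c) * t = (x - c) * (1 - t) := by ring
    rw [this, Real.mul_rpow (le_of_lt hxc) (by linarith), mul_pow]
    ring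
  rw [h1]
  have h4 : (∫ u in (0:ℝ)..(x-c), g u) = (x - c) * ∫ t in (0:ℝ)..1, g ((x-c)*t) := by
    rw [h2, smul_eq_mul]; field_simp
  rw [h4, h3, pow_succ]; ring

lemma poly_iteratedDeriv (p : Polynomial ℝ) (n : ℕ) :
    iteratedDeriv n (fun t => p.eval t) = fun t => (Polynomial.derivative^[n] p).eval t := by
  induction n with
  | zero => simp only [iteratedDeriv_zero, Function.iterate_zero, id]
  | succ n ih =>
    rw [iteratedDeriv_succ, ih]
    funext t
    rw [Function.iterate_succ_apply']
    exact Polynomial.deriv _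

/-- The Caputo fractional derivative of order `1 + α` (0 < α < 1) of `f` at `x`
with base point `c < x`, defined via the second derivative of `f`. -/
noncomputable def caputoSucc (α c : ℝ) (f : ℝ → ℝ) (x : ℝ) : ℝ :=
  (1 / Real.Gamma (1 - α)) * ∫ s in c..x, deriv (deriv f) s * (x - s) ^ (-α)

theorem caputoSucc_taylor (α c x : ℝ) (hα0 : 0 < α) (hα1 : α < 1) (hcx : c < x)
    (p : Polynomial ℝ) :
    (x - c) * caputoSucc α c (fun t => p.eval t) x =
      (x - c) ^ (1 - α) / Real.Gamma (2 - α) *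
        ∑' k : ℕ,
          Real.Gamma (2 - α) / Real.Gamma ((k : ℝ) + 2 - α) *
            iteratedDeriv (k + 2) (fun t => p.eval t) c * (x - c) ^ ((k : ℕ) + 1) := by
  have hxc : (0:ℝ) < x - c := by linarith
  have h1α : (0:ℝ) < 1 - α := by linarith
  set q := p.derivative.derivative with hq
  set N := q.natDegree with hN
  set a : ℕ → ℝ := fun k => (Polynomial.taylor c q).coeff k with ha
  have hq_eval : ∀ s : ℝ, q.eval s = ∑ k ∈ Finset.range (N+1), a k * (s - c)^k := by
    intro s
    conv_lhs => rw [← Polynomial.taylor_eval_sub c q s]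
    rw [Polynomial.eval_eq_sum_range, Polynomial.natDegree_taylor]
  have hdd : deriv (deriv (fun t => p.eval t)) = fun s => q.eval s := by
    have h1 : deriv (fun t => p.eval t) = fun t => p.derivative.eval t :=
      funext fun t => Polynomial.deriv _
    rw [h1]; funext s; exact Polynomial.deriv _
  -- every k-th derivative of q at c equals k! * a k
  have hderiv_q : ∀ k : ℕ, (Polynomial.derivative^[k] q).eval c = (k.factorial : ℝ) * a k := by
    intro k
    have := congrFun (Polynomial.factorial_smul_hasseDeriv (R := ℝ) (k := k)) q
    rw [← this]
    simp [ha, Polynomial.taylor_coeff, mul_comm]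
  have hiter : ∀ k : ℕ, iteratedDeriv (k + 2) (fun t => p.eval t) c
      = (Polynomial.derivative^[k] q).eval c := by
    intro k
    rw [poly_iteratedDeriv]
    congr 1
  -- integrability
  have hint : ∀ k : ℕ, IntervalIntegrable (fun s => (s - c)^k * (x - s)^(-α))
      MeasureTheory.volume c x := by
    intro k
    have hr : IntervalIntegrable (fun u : ℝ => u ^ (-α)) MeasureTheory.volume (x - c) (x - x) :=
      intervalIntegral.intervalIntegrable_rpow' (by linarith)
    have h2 := hr.comp_sub_left x
    simp only [sub_sub_cancel] at h2
    exact h2.continuousOn_mul (by fun_prop)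
  have hIk : ∀ k : ℕ, (∫ s in c..x, (s - c)^k * (x - s)^(-α)) =
      (k.factorial : ℝ) * Real.Gamma (1-α) / Real.Gamma ((k:ℝ)+2-α)
        * ((x - c)^(k+1) * (x - c)^(-α)) := by
    intro k
    rw [scaled_integral k hcx, beta_real k hα0 hα1]; ring
  have hmain : (∫ s in c..x, deriv (deriv (fun t => p.eval t)) s * (x - s)^(-α)) =
      ∑ k ∈ Finset.range (N+1), a k * ((k.factorial : ℝ) * Real.Gamma (1-α)
        / Real.Gamma ((k:ℝ)+2-α) * ((x - c)^(k+1) * (x - c)^(-α))) := by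
    rw [hdd]
    have step : (∫ s in c..x, q.eval s * (x - s)^(-α))
        = ∑ k ∈ Finset.range (N+1), ∫ s in c..x, a k * ((s - c)^k * (x - s)^(-α)) := by
      rw [← intervalIntegral.integral_finset_sum]
      · apply intervalIntegral.integral_congr
        intro s _
        dsimp only
        rw [hq_eval s, Finset.sum_mul]
        exact Finset.sum_congr rfl fun k _ => by ring
      · intro k _
        exact (hint k).const_mul (a k)
    rw [step]
    exact Finset.sum_congr rfl fun k _ => by
      rw [intervalIntegral.integral_const_mul, hIk k]
  -- tsum is a finite sum
  have htsum : (∑' k : ℕ, Real.Gamma (2 - α) / Real.Gamma ((k : ℝ) + 2 - α) *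
        iteratedDeriv (k + 2) (fun t => p.eval t) c * (x - c) ^ ((k : ℕ) + 1))
      = ∑ k ∈ Finset.range (N+1), Real.Gamma (2 - α) / Real.Gamma ((k : ℝ) + 2 - α) *
        iteratedDeriv (k + 2) (fun t => p.eval t) c * (x - c) ^ ((k : ℕ) + 1) := by
    apply tsum_eq_sum
    intro k hk
    rw [Finset.mem_range, not_lt] at hk
    rw [hiter k, Polynomial.iterate_derivative_eq_zero (by omega)]
    simp
  rw [htsum, caputoSucc, hmain, Finset.mul_sum, Finset.mul_sum, Finset.mul_sum]
  apply Finset.sum_congr rfl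
  intro k _
  rw [hiter k, hderiv_q k]
  have hΓ1 : Real.Gamma (1 - α) ≠ 0 := ne_of_gt (Real.Gamma_pos_of_pos h1α)
  have hΓ2 : Real.Gamma (2 - α) ≠ 0 := ne_of_gt (Real.Gamma_pos_of_pos (by linarith))
  have hΓk : Real.Gamma ((k:ℝ) + 2 - α) ≠ 0 :=
    ne_of_gt (Real.Gamma_pos_of_pos (by have := Nat.cast_nonneg (α := ℝ) k; linarith))
  have hpow : (x - c) ^ (1 - α) = (x - c) * (x - c) ^ (-α) := by
    rw [show (1:ℝ) - α = 1 + (-α) by ring, Real.rpow_add hxc, Real.rpow_one]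
  rw [hpow]
  field_simp
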